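/- Let H and H′ be real inner product spaces, G : H → H′ a linear map, α > 0, k > 0, M ≥ 0, c ≥ 0, and let j ≥ 2 be an integer. Let m⁰, …, m^j ∈ H, v², …, v^j ∈ H, h¹, …, h^{j−1} ∈ H and nonnegative reals b₀, …, b_{j−1} be given, and suppose that for each i = 1, …, j−1: (a) m^{i+1} = m^i + k v^{i+1}; (b) there exist a linear subspace K_i of H containing v^{i+1} and a linear map S_i : H → H with ⟪S_i x, x⟫ = 0 for all x, such that for every φ ∈ K_i one has α⟪v^{i+1}, φ⟫ + ⟪S_i v^{i+1}, φ⟫ + (k/2)⟪G v^{i+1}, G φ⟫ = −⟪G m^i, G φ⟫ + ⟪h^i, φ⟫; (c) ‖h^i‖² ≤ M((9/2) b_i + (1/4) b_{i−1} + c). Then (1/2)‖G m^j‖² + (α k / 2) Σ_{i=1}^{j−1} ‖v^{i+1}‖² ≤ (1/2)‖G m¹‖² + (M k /(2α)) Σ_{i=0}^{j−1} (5 b_i + c). -/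

import Mathlib

open RealInnerProductSpace

theorem stmt_2
    {H H' : Type*}
    [NormedAddCommGroup H] [InnerProductSpace ℝ H]
    [NormedAddCommGroup H'] [InnerProductSpace ℝ H']
    (G : H →ₗ[ℝ] H')
    (α k M c : ℝ) (hα : 0 < α) (hk : 0 < k) (hM : 0 ≤ M) (hc : 0 ≤ c)
    (j : ℕ) (hj : 2 ≤ j)
    (m v h : ℕ → H) (b : ℕ → ℝ)
    (hb : ∀ i < j, 0 ≤ b i)
    (hupdate : ∀ i, 1 ≤ i → i ≤ j - 1 → m (i + 1) = m i + k • v (i + 1))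
    (hscheme : ∀ i, 1 ≤ i → i ≤ j - 1 →
      ∃ (K : Submodule ℝ H) (S : H →ₗ[ℝ] H),
        v (i + 1) ∈ K ∧ (∀ x : H, ⟪S x, x⟫ = 0) ∧
        ∀ φ ∈ K,
          α * ⟪v (i + 1), φ⟫ + ⟪S (v (i + 1)), φ⟫
              + (k / 2) * ⟪G (v (i + 1)), G φ⟫
            = -⟪G (m i), G φ⟫ + ⟪h i, φ⟫)
    (hforce : ∀ i, 1 ≤ i → i ≤ j - 1 →
      ‖h i‖ ^ 2 ≤ M * ((9 / 2) * b i + (1 / 4) * b (i - 1) + c)) :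
    (1 / 2) * ‖G (m j)‖ ^ 2
        + (α * k / 2) * ∑ i ∈ Finset.Icc 1 (j - 1), ‖v (i + 1)‖ ^ 2
      ≤ (1 / 2) * ‖G (m 1)‖ ^ 2
        + (M * k / (2 * α)) * ∑ i ∈ Finset.range j, (5 * b i + c) := by
  have hα' : α ≠ 0 := ne_of_gt hα
  -- per-step estimate
  have step : ∀ i, 1 ≤ i → i ≤ j - 1 →
      (1/2) * ‖G (m (i+1))‖^2 + (α*k/2) * ‖v (i+1)‖^2
        ≤ (1/2) * ‖G (m i)‖^2
          + (M*k/(2*α)) * ((9/2) * b i + (1/4) * b (i-1) + c) := by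
    intro i hi1 hi2
    obtain ⟨K, S, hvK, hS, heq⟩ := hscheme i hi1 hi2
    have he := heq _ hvK
    rw [hS, real_inner_self_eq_norm_sq, real_inner_self_eq_norm_sq] at he
    have hm := hupdate i hi1 hi2
    have hexp : ‖G (m (i+1))‖^2
        = ‖G (m i)‖^2 + 2*k*⟪G (m i), G (v (i+1))⟫ + k^2*‖G (v (i+1))‖^2 := by
      rw [hm, map_add, map_smul]
      rw [norm_add_sq_real, real_inner_smul_right, norm_smul]
      rw [Real.norm_eq_abs, abs_of_pos hk]
      ring
    have heng : (1/2) * ‖G (m (i+1))‖^2 + (α*k/2) * ‖v (i+1)‖^2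
        = (1/2) * ‖G (m i)‖^2 - (α*k/2) * ‖v (i+1)‖^2 + k * ⟪h i, v (i+1)⟫ := by
      linear_combination (1/2) * hexp + k * he
    have hCS : ⟪h i, v (i+1)⟫ ≤ ‖h i‖ * ‖v (i+1)‖ := real_inner_le_norm _ _
    have hF := hforce i hi1 hi2
    have h1 : 2*α*⟪h i, v (i+1)⟫
        ≤ M * ((9/2) * b i + (1/4) * b (i-1) + c) + α^2 * ‖v (i+1)‖^2 := by
      nlinarith [sq_nonneg (‖h i‖ - α * ‖v (i+1)‖), hα, norm_nonneg (v (i+1)),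
        norm_nonneg (h i)]
    have h2 : k * ⟪h i, v (i+1)⟫
        ≤ (M*k/(2*α)) * ((9/2) * b i + (1/4) * b (i-1) + c)
          + (α*k/2) * ‖v (i+1)‖^2 := by
      have hr : 0 ≤ k / (2*α) := by positivity
      have := mul_le_mul_of_nonneg_left h1 hr
      calc k * ⟪h i, v (i+1)⟫ = (k/(2*α)) * (2*α*⟪h i, v (i+1)⟫) := by
            field_simp
        _ ≤ (k/(2*α)) * (M * ((9/2) * b i + (1/4) * b (i-1) + c)
              + α^2 * ‖v (i+1)‖^2) := this
        _ = (M*k/(2*α)) * ((9/2) * b i + (1/4) * b (i-1) + c)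
              + (α*k/2) * ‖v (i+1)‖^2 := by field_simp
    linarith [heng, h2]
  -- main induction
  have main : ∀ n, n ≤ j - 1 →
      (1/2) * ‖G (m (n+1))‖^2 + (α*k/2) * ∑ i ∈ Finset.Icc 1 n, ‖v (i+1)‖^2
        ≤ (1/2) * ‖G (m 1)‖^2
          + (M*k/(2*α)) * ∑ i ∈ Finset.Icc 1 n,
              ((9/2) * b i + (1/4) * b (i-1) + c) := by
    intro n
    induction n with
    | zero => intro _; simp
    | succ n ih =>
      intro hn
      have hn' : n ≤ j - 1 := by omega
      have h1n : 1 ≤ n + 1 := by omega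
      rw [Finset.sum_Icc_succ_top h1n, Finset.sum_Icc_succ_top h1n]
      have hst := step (n+1) h1n hn
      have := ih hn'
      linarith
  have hmain := main (j-1) le_rfl
  have hj1 : j - 1 + 1 = j := by omega
  rw [hj1] at hmain
  -- compare the sums
  have shift : ∑ i ∈ Finset.Icc 1 (j-1), (1/4 : ℝ) * b (i-1)
      = ∑ i ∈ Finset.range (j-1), (1/4 : ℝ) * b i := by
    rw [← Finset.Ico_add_one_right_eq_Icc, Finset.sum_Ico_eq_sum_range]
    simp
  have hbsum : ∀ s : Finset ℕ, s ⊆ Finset.range j →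
      ∑ i ∈ s, b i ≤ ∑ i ∈ Finset.range j, b i := by
    intro s hs
    refine Finset.sum_le_sum_of_subset_of_nonneg hs ?_
    intro i hi _
    exact hb i (Finset.mem_range.mp hi)
  have hbnn : 0 ≤ ∑ i ∈ Finset.range j, b i :=
    Finset.sum_nonneg fun i hi => hb i (Finset.mem_range.mp hi)
  have hsum : ∑ i ∈ Finset.Icc 1 (j-1), ((9/2) * b i + (1/4) * b (i-1) + c)
      ≤ ∑ i ∈ Finset.range j, (5 * b i + c) := by
    rw [Finset.sum_add_distrib, Finset.sum_add_distrib, shift,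
      ← Finset.mul_sum, ← Finset.mul_sum, Finset.sum_add_distrib,
      ← Finset.mul_sum, Finset.sum_const, Finset.sum_const]
    have hs1 : ∑ i ∈ Finset.Icc 1 (j-1), b i ≤ ∑ i ∈ Finset.range j, b i := by
      apply hbsum
      intro i hi
      simp only [Finset.mem_Icc] at hi
      exact Finset.mem_range.mpr (by omega)
    have hs2 : ∑ i ∈ Finset.range (j-1), b i ≤ ∑ i ∈ Finset.range j, b i := by
      apply hbsum
      exact Finset.range_subset_range.mpr (by omega)
    have hc1 : ((Finset.Icc 1 (j-1)).card : ℝ) ≤ (Finset.range j).card := by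
      simp only [Nat.card_Icc, Finset.card_range]
      norm_cast
      omega
    have hc2 : (0:ℝ) ≤ ((Finset.range j).card : ℝ) • c - ((Finset.Icc 1 (j-1)).card : ℝ) • c := by
      rw [smul_eq_mul, smul_eq_mul]
      nlinarith
    rw [nsmul_eq_mul, nsmul_eq_mul] at *
    nlinarith
  have hcoef : 0 ≤ M*k/(2*α) := by positivity
  have := mul_le_mul_of_nonneg_left hsum hcoef
  calc (1 / 2) * ‖G (m j)‖ ^ 2
        + (α * k / 2) * ∑ i ∈ Finset.Icc 1 (j - 1), ‖v (i + 1)‖ ^ 2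
      ≤ (1/2) * ‖G (m 1)‖^2
          + (M*k/(2*α)) * ∑ i ∈ Finset.Icc 1 (j-1),
              ((9/2) * b i + (1/4) * b (i-1) + c) := hmain
    _ ≤ (1 / 2) * ‖G (m 1)‖ ^ 2
        + (M * k / (2 * α)) * ∑ i ∈ Finset.range j, (5 * b i + c) := by linarith
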